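/- arXiv:2103.08211 — 2 statements merged into one kernel-verified Lean document; each statement's English description precedes it below -/
import Mathlib

section
/- For 0 < p ≤ 2 and 0 < ε < 1, the Schatten p-norm satisfies the smoothness property with parameters (ε, ε): for all real matrices A, Y, C with m columns such that A is the vertical concatenation of some matrix X and Y, if (1 − ε)·‖A‖_{S_p} ≤ ‖Y‖_{S_p}, then (1 − ε)·‖[A; C]‖_{S_p} ≤ ‖[Y; C]‖_{S_p}, where [M; C] denotes vertical concatenation. -/
open Matrix

/-- The Schatten `p`-norm of a real matrix `M` with `m` columns:
`(∑ i, σᵢ(M) ^ p) ^ (1/p)`, where the singular values `σᵢ(M)` are the square roots of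
the eigenvalues of `MᴴM` (over `ℝ`, `Mᴴ = Mᵀ`). -/
noncomputable def schattenNorm {N : Type*} [Fintype N] {m : ℕ} (p : ℝ)
    (M : Matrix N (Fin m) ℝ) : ℝ :=
  (∑ i, Real.sqrt ((Matrix.isHermitian_conjTranspose_mul_self M).eigenvalues i) ^ p) ^ (1 / p)

section SchattenAux

open Matrix MeasureTheory Real Set
open scoped NNReal

namespace SchattenSmoothAux


variable {m : ℕ}


variable {m : ℕ}

lemma dot_symm {P : Matrix (Fin m) (Fin m) ℝ} (hP : P.IsHermitian) (a b : Fin m → ℝ) :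
    a ⬝ᵥ (P *ᵥ b) = b ⬝ᵥ (P *ᵥ a) := by
  have hPt : Pᵀ = P := by
    ext i j
    have := congrFun (congrFun hP j) i
    simpa [conjTranspose_apply] using this.symm
  rw [dotProduct_mulVec, dotProduct_comm, ← mulVec_transpose, hPt]

lemma quad_nonneg {Q : Matrix (Fin m) (Fin m) ℝ} (hQ : Q.PosSemidef) (x : Fin m → ℝ) :
    0 ≤ x ⬝ᵥ (Q *ᵥ x) := by simpa using hQ.dotProduct_mulVec_nonneg x

lemma inv_quad_anti {P Q : Matrix (Fin m) (Fin m) ℝ} (hP : P.PosDef) (hQ : Q.PosSemidef)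
    (v : Fin m → ℝ) : v ⬝ᵥ ((P + Q)⁻¹ *ᵥ v) ≤ v ⬝ᵥ (P⁻¹ *ᵥ v) := by
  have hR : (P + Q).PosDef := hP.add_posSemidef hQ
  set w : Fin m → ℝ := (P + Q)⁻¹ *ᵥ v with hw
  set u : Fin m → ℝ := P⁻¹ *ᵥ v with hu
  have hv1 : (P + Q) *ᵥ w = v := by
    rw [hw, mulVec_mulVec, mul_nonsing_inv _ (isUnit_iff_ne_zero.2 hR.det_pos.ne'), one_mulVec]
  have hv2 : P *ᵥ u = v := by
    rw [hu, mulVec_mulVec, mul_nonsing_inv _ (isUnit_iff_ne_zero.2 hP.det_pos.ne'), one_mulVec]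
  have key : 0 ≤ (u - w) ⬝ᵥ (P *ᵥ (u - w)) := quad_nonneg hP.posSemidef _
  have expand : (u - w) ⬝ᵥ (P *ᵥ (u - w))
      = u ⬝ᵥ v - 2 * (w ⬝ᵥ v) + w ⬝ᵥ (P *ᵥ w) := by
    rw [mulVec_sub, dotProduct_sub, sub_dotProduct, sub_dotProduct]
    have h1 : u ⬝ᵥ (P *ᵥ u) = u ⬝ᵥ v := by rw [hv2]
    have h2 : u ⬝ᵥ (P *ᵥ w) = w ⬝ᵥ v := by rw [dot_symm hP.isHermitian u w, hv2]
    have h3 : w ⬝ᵥ (P *ᵥ u) = w ⬝ᵥ v := by rw [hv2]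
    rw [h1, h2, h3]; ring
  have hQw : 0 ≤ w ⬝ᵥ (Q *ᵥ w) := quad_nonneg hQ w
  have hwv : w ⬝ᵥ v = w ⬝ᵥ (P *ᵥ w) + w ⬝ᵥ (Q *ᵥ w) := by
    rw [← hv1, add_mulVec, dotProduct_add]
  have hcomm1 : v ⬝ᵥ w = w ⬝ᵥ v := dotProduct_comm _ _
  have hcomm2 : v ⬝ᵥ u = u ⬝ᵥ v := dotProduct_comm _ _
  rw [← hw, ← hu] at *
  linarith [key, expand ▸ key]

lemma mul_vecMulVec (M : Matrix (Fin m) (Fin m) ℝ) (v w : Fin m → ℝ) :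
    M * vecMulVec v w = vecMulVec (M *ᵥ v) w := by
  ext a b
  simp only [mul_apply, vecMulVec_apply, mulVec, dotProduct]
  rw [Finset.sum_mul]
  exact Finset.sum_congr rfl fun c _ => by ring

lemma det_add_vecMulVec {P : Matrix (Fin m) (Fin m) ℝ} (hP : P.PosDef) (v : Fin m → ℝ) :
    (P + vecMulVec v v).det = P.det * (1 + v ⬝ᵥ (P⁻¹ *ᵥ v)) := by
  have h1 : P * P⁻¹ = 1 := mul_nonsing_inv _ (isUnit_iff_ne_zero.2 hP.det_pos.ne')
  have h2 : P + vecMulVec v v = P * (1 + vecMulVec (P⁻¹ *ᵥ v) v) := by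
    rw [mul_add, mul_one, mul_vecMulVec, mulVec_mulVec, h1, one_mulVec]
  rw [h2, det_mul, vecMulVec_eq Unit, det_one_add_replicateCol_mul_replicateRow]

lemma psd_vecMulVec (v : Fin m → ℝ) : (vecMulVec v v).PosSemidef := by
  simpa using posSemidef_vecMulVec_self_star v

lemma det_submod_one {P Q : Matrix (Fin m) (Fin m) ℝ} (hP : P.PosDef) (hQ : Q.PosSemidef)
    (v : Fin m → ℝ) :
    (P + Q + vecMulVec v v).det / (P + vecMulVec v v).det ≤ (P + Q).det / P.det := by
  have hPQ : (P + Q).PosDef := hP.add_posSemidef hQ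
  have e1 : (P + Q + vecMulVec v v).det = (P + Q).det * (1 + v ⬝ᵥ ((P + Q)⁻¹ *ᵥ v)) :=
    det_add_vecMulVec hPQ v
  have e2 : (P + vecMulVec v v).det = P.det * (1 + v ⬝ᵥ (P⁻¹ *ᵥ v)) := det_add_vecMulVec hP v
  have hq1 : 0 ≤ v ⬝ᵥ ((P + Q)⁻¹ *ᵥ v) := quad_nonneg hPQ.inv.posSemidef v
  have hq2 : v ⬝ᵥ ((P + Q)⁻¹ *ᵥ v) ≤ v ⬝ᵥ (P⁻¹ *ᵥ v) := inv_quad_anti hP hQ v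
  have hd1 : 0 < P.det := hP.det_pos
  have hd2 : 0 < (P + Q).det := hPQ.det_pos
  have hq0 : 0 ≤ v ⬝ᵥ (P⁻¹ *ᵥ v) := le_trans hq1 hq2
  have hpos : (0:ℝ) < P.det * (1 + v ⬝ᵥ (P⁻¹ *ᵥ v)) := by nlinarith
  rw [e1, e2, div_le_div_iff₀ hpos hd1]
  nlinarith [mul_pos hd1 hd2]

lemma det_submod {ι : Type*} (s : Finset ι) (V : ι → (Fin m → ℝ))
    {Q : Matrix (Fin m) (Fin m) ℝ} (hQ : Q.PosSemidef) :
    ∀ {P : Matrix (Fin m) (Fin m) ℝ}, P.PosDef →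
      (P + Q + ∑ i ∈ s, vecMulVec (V i) (V i)).det / (P + ∑ i ∈ s, vecMulVec (V i) (V i)).det
        ≤ (P + Q).det / P.det := by
  classical
  induction s using Finset.induction with
  | empty => intro P hP; simp
  | insert a s hx ih =>
    intro P hP
    rw [Finset.sum_insert hx]
    have hP' : (P + vecMulVec (V a) (V a)).PosDef :=
      hP.add_posSemidef (psd_vecMulVec (V a))
    have step := det_submod_one hP hQ (V a)
    have main := ih hP'
    calc (P + Q + (vecMulVec (V a) (V a) + ∑ i ∈ s, vecMulVec (V i) (V i))).det /
          (P + (vecMulVec (V a) (V a) + ∑ i ∈ s, vecMulVec (V i) (V i))).det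
        = ((P + vecMulVec (V a) (V a)) + Q + ∑ i ∈ s, vecMulVec (V i) (V i)).det /
          ((P + vecMulVec (V a) (V a)) + ∑ i ∈ s, vecMulVec (V i) (V i)).det := by
          congr 2 <;> abel
      _ ≤ ((P + vecMulVec (V a) (V a)) + Q).det / (P + vecMulVec (V a) (V a)).det := main
      _ = (P + Q + vecMulVec (V a) (V a)).det / (P + vecMulVec (V a) (V a)).det := by
          congr 2; abel
      _ ≤ (P + Q).det / P.det := step

lemma det_mono {ι : Type*} (s : Finset ι) (V : ι → (Fin m → ℝ)) :
    ∀ {P : Matrix (Fin m) (Fin m) ℝ}, P.PosDef →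
      P.det ≤ (P + ∑ i ∈ s, vecMulVec (V i) (V i)).det := by
  classical
  induction s using Finset.induction with
  | empty => intro P hP; simp
  | insert a s hx ih =>
    intro P hP
    rw [Finset.sum_insert hx]
    have hP' : (P + vecMulVec (V a) (V a)).PosDef := hP.add_posSemidef (psd_vecMulVec (V a))
    have h1 : P.det ≤ (P + vecMulVec (V a) (V a)).det := by
      rw [det_add_vecMulVec hP]
      nlinarith [hP.det_pos, quad_nonneg hP.inv.posSemidef (V a)]
    calc P.det ≤ (P + vecMulVec (V a) (V a)).det := h1
      _ ≤ ((P + vecMulVec (V a) (V a)) + ∑ i ∈ s, vecMulVec (V i) (V i)).det := ih hP'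
      _ = (P + (vecMulVec (V a) (V a) + ∑ i ∈ s, vecMulVec (V i) (V i))).det := by
          congr 1; abel

lemma transpose_mul_self_eq_sum {k : ℕ} (X : Matrix (Fin k) (Fin m) ℝ) :
    Xᵀ * X = ∑ i, vecMulVec (X i) (X i) := by
  ext a b
  simp only [mul_apply, transpose_apply, Matrix.sum_apply, vecMulVec_apply]



variable {m : ℕ}

lemma smul_one_eq_diag (t : ℝ) :
    t • (1 : Matrix (Fin m) (Fin m) ℝ) = Matrix.diagonal (fun _ => t) := by
  ext i j
  by_cases h : i = j <;> simp [h, Matrix.one_apply, Matrix.diagonal_apply]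

lemma det_add_smul_one {N : Matrix (Fin m) (Fin m) ℝ} (hN : N.IsHermitian) (t : ℝ) :
    (N + t • 1).det = ∏ i, (hN.eigenvalues i + t) := by
  set V : Matrix (Fin m) (Fin m) ℝ := (hN.eigenvectorUnitary : Matrix (Fin m) (Fin m) ℝ)
  have hV1 : V * star V = 1 := (Matrix.mem_unitaryGroup_iff).mp hN.eigenvectorUnitary.2
  have key : N + t • 1 = V * (Matrix.diagonal (RCLike.ofReal ∘ hN.eigenvalues) + t • 1) * star V := by
    have hs : V * Matrix.diagonal (RCLike.ofReal ∘ hN.eigenvalues) * star V = N :=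
      hN.spectral_theorem.symm
    rw [mul_add, add_mul, hs]
    congr 1
    rw [Matrix.mul_smul, mul_one, Matrix.smul_mul, hV1]
  have hV2 : star V * V = 1 := (Matrix.mem_unitaryGroup_iff').mp hN.eigenvectorUnitary.2
  rw [key, det_mul, det_mul, mul_comm, ← mul_assoc, ← det_mul, ← det_mul, mul_assoc,
    ← Matrix.mul_assoc, hV2, Matrix.one_mul]
  rw [smul_one_eq_diag, diagonal_add, det_diagonal]
  simp [RCLike.ofReal]

lemma sum_eigs_eq_trace {N : Matrix (Fin m) (Fin m) ℝ} (hN : N.IsHermitian) :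
    ∑ i, hN.eigenvalues i = N.trace := by
  set V : Matrix (Fin m) (Fin m) ℝ := (hN.eigenvectorUnitary : Matrix (Fin m) (Fin m) ℝ)
  have hV2 : star V * V = 1 := (Matrix.mem_unitaryGroup_iff').mp hN.eigenvectorUnitary.2
  conv_rhs => rw [hN.spectral_theorem, Unitary.conjStarAlgAut_apply]
  rw [trace_mul_comm, ← mul_assoc, hV2, one_mul, trace_diagonal]
  simp [RCLike.ofReal]



noncomputable def g (q ν t : ℝ) : ℝ := t ^ (q - 1) * Real.log (1 + ν / t)

noncomputable def Hq (q : ℝ) : ℝ := ∫ t in Ioi (0:ℝ), g q 1 t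

lemma g_nonneg {q ν : ℝ} (hν : 0 ≤ ν) {t : ℝ} (ht : 0 < t) : 0 ≤ g q ν t := by
  apply mul_nonneg (Real.rpow_nonneg ht.le _)
  apply Real.log_nonneg
  have : 0 ≤ ν / t := div_nonneg hν ht.le
  linarith

lemma log_one_add_le {s t : ℝ} (hs0 : 0 < s) (hs1 : s ≤ 1) (ht : 0 ≤ t) :
    Real.log (1 + t) ≤ t ^ s / s := by
  have h1t : (0:ℝ) < 1 + t := by linarith
  have hlog : s * Real.log (1 + t) = Real.log ((1 + t) ^ s) := (Real.log_rpow h1t s).symm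
  have h2 : Real.log ((1 + t) ^ s) ≤ (1 + t) ^ s - 1 :=
    Real.log_le_sub_one_of_pos (Real.rpow_pos_of_pos h1t s)
  have h3 : (1 + t) ^ s ≤ 1 + t ^ s := by
    have := NNReal.rpow_add_le_add_rpow 1 t.toNNReal hs0.le hs1
    have hc : ((1 + t.toNNReal : ℝ≥0) : ℝ) = 1 + t := by
      simp [Real.coe_toNNReal t ht]
    calc (1 + t) ^ s = (((1 + t.toNNReal : ℝ≥0) : ℝ)) ^ s := by rw [hc]
      _ = (((1 + t.toNNReal) ^ s : ℝ≥0) : ℝ) := by rw [← NNReal.coe_rpow]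
      _ ≤ (((1:ℝ≥0) ^ s + t.toNNReal ^ s : ℝ≥0) : ℝ) := by exact_mod_cast this
      _ = 1 + t ^ s := by
          push_cast
          simp [Real.coe_toNNReal t ht, Real.one_rpow]
  have : s * Real.log (1 + t) ≤ t ^ s := by
    rw [hlog]; linarith
  rw [le_div_iff₀ hs0]; linarith [this]

lemma g_continuousOn {q ν : ℝ} (hν : 0 ≤ ν) : ContinuousOn (g q ν) (Ioi 0) := by
  apply ContinuousOn.mul
  · exact continuousOn_id.rpow_const fun x hx => Or.inl (ne_of_gt hx)
  · apply ContinuousOn.log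
    · exact continuousOn_const.add (continuousOn_const.div continuousOn_id
        fun x hx => ne_of_gt hx)
    · intro x hx
      have h : 0 ≤ ν / x := div_nonneg hν (le_of_lt hx)
      positivity

lemma integrableOn_g {q ν : ℝ} (hq0 : 0 < q) (hq1 : q < 1) (hν : 0 ≤ ν) :
    IntegrableOn (g q ν) (Ioi 0) := by
  have hmeas : ∀ s : Set ℝ, s ⊆ Ioi (0:ℝ) → MeasurableSet s →
      AEStronglyMeasurable (g q ν) (volume.restrict s) :=
    fun s hs hms => ((g_continuousOn hν).mono hs).aestronglyMeasurable hms
  have hunion : Ioc (0:ℝ) 1 ∪ Ioi 1 = Ioi 0 := Ioc_union_Ioi_eq_Ioi zero_le_one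
  have part1 : IntegrableOn (g q ν) (Ioc 0 1) := by
    have hbound : IntegrableOn (fun t : ℝ => (ν ^ (q/2) / (q/2)) * t ^ (q/2 - 1)) (Ioc 0 1) := by
      apply Integrable.const_mul
      exact (intervalIntegral.intervalIntegrable_rpow' (by linarith : (-1:ℝ) < q/2 - 1)).1
    apply Integrable.mono' hbound (hmeas _ Ioc_subset_Ioi_self measurableSet_Ioc)
    rw [ae_restrict_iff' measurableSet_Ioc]
    filter_upwards with t ht
    obtain ⟨ht0, ht1⟩ := ht
    rw [Real.norm_eq_abs, abs_of_nonneg (g_nonneg hν ht0)]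
    simp only [g]
    have hlog : Real.log (1 + ν / t) ≤ (ν / t) ^ (q/2) / (q/2) :=
      log_one_add_le (by linarith) (by linarith) (div_nonneg hν ht0.le)
    have hrw : (ν / t) ^ (q/2) = ν ^ (q/2) * t ^ (-(q/2)) := by
      rw [Real.div_rpow hν ht0.le, Real.rpow_neg ht0.le, div_eq_mul_inv]
    calc t ^ (q-1) * Real.log (1 + ν / t) ≤ t ^ (q-1) * ((ν / t) ^ (q/2) / (q/2)) := by
          apply mul_le_mul_of_nonneg_left hlog (Real.rpow_nonneg ht0.le _)
      _ = (ν ^ (q/2) / (q/2)) * (t ^ (q-1) * t ^ (-(q/2))) := by rw [hrw]; ring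
      _ = (ν ^ (q/2) / (q/2)) * t ^ (q/2 - 1) := by
          rw [← Real.rpow_add ht0]; ring_nf
  have part2 : IntegrableOn (g q ν) (Ioi 1) := by
    have hbound : IntegrableOn (fun t : ℝ => ν * t ^ (q - 2)) (Ioi 1) :=
      (integrableOn_Ioi_rpow_of_lt (by linarith) one_pos).const_mul ν
    apply Integrable.mono' hbound (hmeas _ (fun x hx => mem_Ioi.2 (lt_trans one_pos hx)) measurableSet_Ioi)
    rw [ae_restrict_iff' measurableSet_Ioi]
    filter_upwards with t ht
    have ht0 : (0:ℝ) < t := lt_trans one_pos ht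
    rw [Real.norm_eq_abs, abs_of_nonneg (g_nonneg hν ht0)]
    simp only [g]
    have hlog : Real.log (1 + ν / t) ≤ ν / t := by
      have := Real.log_le_sub_one_of_pos (show (0:ℝ) < 1 + ν / t by
        have : 0 ≤ ν / t := div_nonneg hν ht0.le; linarith)
      linarith
    calc t ^ (q-1) * Real.log (1 + ν / t) ≤ t ^ (q-1) * (ν / t) := by
          apply mul_le_mul_of_nonneg_left hlog (Real.rpow_nonneg ht0.le _)
      _ = ν * (t ^ (q-1) * t ^ (-1 : ℝ)) := by
          rw [Real.rpow_neg_one]; field_simp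
      _ = ν * t ^ (q - 2) := by rw [← Real.rpow_add ht0]; ring_nf
  rw [← hunion]
  exact part1.union part2


lemma integral_g {q : ℝ} (hq0 : 0 < q) (hq1 : q < 1) {ν : ℝ} (hν : 0 ≤ ν) :
    ∫ t in Ioi (0:ℝ), g q ν t = ν ^ q * Hq q := by
  rcases eq_or_lt_of_le hν with h | h
  · subst h
    have : ∀ t ∈ Ioi (0:ℝ), g q 0 t = 0 := by
      intro t ht; simp [g]
    rw [setIntegral_congr_fun measurableSet_Ioi this]
    simp [Real.zero_rpow hq0.ne']
  · have key := integral_comp_mul_left_Ioi (g q ν) 0 h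
    rw [mul_zero] at key
    have hcong : EqOn (fun x => g q ν (ν * x)) (fun x => ν ^ (q - 1) * g q 1 x) (Ioi 0) := by
      intro x hx
      have hx0 : (0:ℝ) < x := hx
      simp only [g]
      rw [Real.mul_rpow h.le hx0.le]
      have : ν / (ν * x) = 1 / x := by
        field_simp
      rw [this]
      ring
    have e1 : ∫ x in Ioi (0:ℝ), g q ν (ν * x) = ν ^ (q - 1) * Hq q := by
      rw [setIntegral_congr_fun measurableSet_Ioi hcong, MeasureTheory.integral_const_mul]
      rfl
    rw [e1, smul_eq_mul] at key
    have hν0 : ν ≠ 0 := h.ne'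
    have hpow : ν ^ q = ν * ν ^ (q - 1) := by
      rw [show q = 1 + (q - 1) by ring, Real.rpow_add h, Real.rpow_one]
      ring_nf
    rw [hpow]
    field_simp at key ⊢
    linarith [key]


lemma Hq_pos {q : ℝ} (hq0 : 0 < q) (hq1 : q < 1) : 0 < Hq q := by
  have hint : IntegrableOn (g q 1) (Ioi 0) := integrableOn_g hq0 hq1 zero_le_one
  have hsub : Ioc (1:ℝ) 2 ⊆ Ioi 0 := fun x hx => lt_trans one_pos hx.1
  set c : ℝ := 2 ^ (q-1) * Real.log (3/2) with hcdef
  have hc : 0 < c := mul_pos (Real.rpow_pos_of_pos two_pos _) (Real.log_pos (by norm_num))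
  have hlow : ∀ t ∈ Ioc (1:ℝ) 2, c ≤ g q 1 t := by
    rintro t ⟨ht1, ht2⟩
    have ht0 : (0:ℝ) < t := lt_trans one_pos ht1
    have h1 : (2:ℝ) ^ (q-1) ≤ t ^ (q-1) := Real.rpow_le_rpow_of_nonpos ht0 ht2 (by linarith)
    have h2 : Real.log (3/2) ≤ Real.log (1 + 1/t) := by
      apply Real.log_le_log (by norm_num)
      have : (1:ℝ)/2 ≤ 1/t := by
        rw [div_le_div_iff₀ two_pos ht0]
        linarith
      linarith
    have hlogpos : 0 < Real.log (3/2) := Real.log_pos (by norm_num)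
    calc c = 2 ^ (q-1) * Real.log (3/2) := hcdef
      _ ≤ t ^ (q-1) * Real.log (3/2) := mul_le_mul_of_nonneg_right h1 hlogpos.le
      _ ≤ t ^ (q-1) * Real.log (1 + 1/t) :=
          mul_le_mul_of_nonneg_left h2 (Real.rpow_nonneg ht0.le _)
      _ = g q 1 t := rfl
  have hmeas2 : MeasurableSet (Ioc (1:ℝ) 2) := measurableSet_Ioc
  have hconst : IntegrableOn (fun _ : ℝ => c) (Ioc 1 2) := by
    exact integrableOn_const measure_Ioc_lt_top.ne
  have big : c ≤ ∫ t in Ioc (1:ℝ) 2, g q 1 t := by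
    have h0 : ∫ _ in Ioc (1:ℝ) 2, c = c := by
      rw [setIntegral_const]
      simp [Real.volume_Ioc]
      norm_num
    rw [← h0]
    exact setIntegral_mono_on hconst (hint.mono_set hsub) hmeas2 hlow
  have mono : ∫ t in Ioc (1:ℝ) 2, g q 1 t ≤ Hq q := by
    apply setIntegral_mono_set hint
    · rw [Filter.EventuallyLE, ae_restrict_iff' measurableSet_Ioi]
      filter_upwards with t ht
      exact g_nonneg zero_le_one ht
    · exact HasSubset.Subset.eventuallyLE hsub
  linarith



lemma sum_log_eigs {N : Matrix (Fin m) (Fin m) ℝ} (hN : N.PosSemidef) {t : ℝ} (ht : 0 < t) :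
    ∑ i, Real.log (1 + hN.1.eigenvalues i / t)
      = Real.log ((N + t • 1).det) - m * Real.log t := by
  have heig : ∀ i, 0 ≤ hN.1.eigenvalues i := hN.eigenvalues_nonneg
  rw [det_add_smul_one hN.1 t,
    Real.log_prod (fun i _ => by have := heig i; positivity)]
  have hpt : ∀ i : Fin m, Real.log (hN.1.eigenvalues i + t)
      = Real.log (1 + hN.1.eigenvalues i / t) + Real.log t := by
    intro i
    rw [← Real.log_mul (by have := heig i; positivity) ht.ne']
    congr 1
    field_simp
    ring
  simp only [hpt]
  rw [Finset.sum_add_distrib, Finset.sum_const, Finset.card_univ, Fintype.card_fin]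
  push_cast
  ring

lemma master {q : ℝ} (hq0 : 0 < q) (hq1 : q < 1) {N : Matrix (Fin m) (Fin m) ℝ}
    (hN : N.PosSemidef) :
    Hq q * ∑ i, hN.1.eigenvalues i ^ q
      = ∫ t in Ioi (0:ℝ), t ^ (q-1) * (Real.log ((N + t • 1).det) - m * Real.log t) := by
  have heig : ∀ i, 0 ≤ hN.1.eigenvalues i := hN.eigenvalues_nonneg
  have hcong : EqOn (fun t : ℝ => ∑ i, g q (hN.1.eigenvalues i) t)
      (fun t : ℝ => t ^ (q-1) * (Real.log ((N + t • 1).det) - m * Real.log t)) (Ioi 0) := by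
    intro t ht
    have ht0 : (0:ℝ) < t := ht
    simp only [g]
    rw [← Finset.mul_sum, sum_log_eigs hN ht0]
  rw [← setIntegral_congr_fun measurableSet_Ioi hcong,
    integral_finset_sum _ (fun i _ => integrableOn_g hq0 hq1 (heig i))]
  rw [Finset.mul_sum]
  exact Finset.sum_congr rfl fun i _ => by
    rw [integral_g hq0 hq1 (heig i)]; ring

lemma master_integrable {q : ℝ} (hq0 : 0 < q) (hq1 : q < 1) {N : Matrix (Fin m) (Fin m) ℝ}
    (hN : N.PosSemidef) :
    IntegrableOn (fun t : ℝ => t ^ (q-1) * (Real.log ((N + t • 1).det) - m * Real.log t))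
      (Ioi 0) := by
  have heig : ∀ i, 0 ≤ hN.1.eigenvalues i := hN.eigenvalues_nonneg
  have hcong : EqOn (fun t : ℝ => ∑ i, g q (hN.1.eigenvalues i) t)
      (fun t : ℝ => t ^ (q-1) * (Real.log ((N + t • 1).det) - m * Real.log t)) (Ioi 0) := by
    intro t ht
    have ht0 : (0:ℝ) < t := ht
    simp only [g]
    rw [← Finset.mul_sum, sum_log_eigs hN ht0]
  exact MeasureTheory.IntegrableOn.congr_fun
    (integrable_finset_sum _ (fun i _ => integrableOn_g hq0 hq1 (heig i)))
    hcong measurableSet_Ioi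

lemma pd_smul_one {t : ℝ} (ht : 0 < t) : (t • (1 : Matrix (Fin m) (Fin m) ℝ)).PosDef := by
  rw [smul_one_eq_diag]
  exact posDef_diagonal_iff.2 fun _ => ht

lemma psd_gram {k : ℕ} (X : Matrix (Fin k) (Fin m) ℝ) : (Xᵀ * X).PosSemidef := by
  have h := posSemidef_conjTranspose_mul_self X
  have hct : Xᴴ = Xᵀ := by ext i j; simp [conjTranspose_apply]
  rwa [hct] at h

lemma trace_gram_nonneg {k : ℕ} (X : Matrix (Fin k) (Fin m) ℝ) : 0 ≤ (Xᵀ * X).trace := by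
  rw [trace]
  apply Finset.sum_nonneg
  intro a _
  simp only [diag_apply, mul_apply, transpose_apply]
  exact Finset.sum_nonneg fun i _ => mul_self_nonneg _

/-- Key submodularity at the level of eigenvalue power sums, `0 < q ≤ 1`. -/
lemma Fq_submod {q : ℝ} (hq0 : 0 < q) (hq1 : q ≤ 1) {n₁ n₃ : ℕ}
    (X : Matrix (Fin n₁) (Fin m) ℝ) (C : Matrix (Fin n₃) (Fin m) ℝ)
    {T : Matrix (Fin m) (Fin m) ℝ} (hT : T.PosSemidef)
    (h1 : (Xᵀ * X + T + Cᵀ * C).PosSemidef) (h2 : (Xᵀ * X + T).PosSemidef)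
    (h3 : (T + Cᵀ * C).PosSemidef) :
    ∑ i, h1.1.eigenvalues i ^ q + ∑ i, hT.1.eigenvalues i ^ q
      ≤ ∑ i, h2.1.eigenvalues i ^ q + ∑ i, h3.1.eigenvalues i ^ q := by
  rcases lt_or_eq_of_le hq1 with hq1' | rfl
  · -- 0 < q < 1 : integral representation
    have HH := Hq_pos hq0 hq1'
    rw [← mul_le_mul_iff_right₀ HH, mul_add, mul_add, master hq0 hq1' h1, master hq0 hq1' hT,
      master hq0 hq1' h2, master hq0 hq1' h3,
      ← integral_add (master_integrable hq0 hq1' h1) (master_integrable hq0 hq1' hT),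
      ← integral_add (master_integrable hq0 hq1' h2) (master_integrable hq0 hq1' h3)]
    apply setIntegral_mono_on
      ((master_integrable hq0 hq1' h1).add (master_integrable hq0 hq1' hT))
      ((master_integrable hq0 hq1' h2).add (master_integrable hq0 hq1' h3))
      measurableSet_Ioi
    intro t ht
    have ht0 : (0:ℝ) < t := ht
    simp only [Pi.add_apply]
    rw [← mul_add, ← mul_add]
    apply mul_le_mul_of_nonneg_left _ (Real.rpow_nonneg ht0.le _)
    have hP : (T + t • (1 : Matrix (Fin m) (Fin m) ℝ)).PosDef :=
      Matrix.PosDef.posSemidef_add hT (pd_smul_one ht0)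
    have hdm := det_submod (Finset.univ) (fun i => X i) (psd_gram C) hP
    rw [transpose_mul_self_eq_sum X] at *
    -- identify the four matrices
    have e1 : T + t • 1 + Cᵀ * C + ∑ i, vecMulVec (X i) (X i)
        = (∑ i, vecMulVec (X i) (X i)) + T + Cᵀ * C + t • 1 := by abel
    have e2 : T + t • 1 + ∑ i, vecMulVec (X i) (X i)
        = (∑ i, vecMulVec (X i) (X i)) + T + t • 1 := by abel
    have e3 : T + t • 1 + Cᵀ * C = T + Cᵀ * C + t • 1 := by abel
    rw [e1, e2, e3] at hdm
    have hd1 : (0:ℝ) < ((∑ i, vecMulVec (X i) (X i)) + T + t • 1).det := by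
      have : ((∑ i, vecMulVec (X i) (X i)) + T + t • 1).PosDef := by
        have : ((∑ i, vecMulVec (X i) (X i)) + T + t • 1)
            = ((∑ i, vecMulVec (X i) (X i)) + T) + t • 1 := by abel
        rw [this]
        exact Matrix.PosDef.posSemidef_add h2 (pd_smul_one ht0)
      exact this.det_pos
    have hd2 : (0:ℝ) < (T + t • 1).det := hP.det_pos
    have hd3 : (0:ℝ) < ((∑ i, vecMulVec (X i) (X i)) + T + Cᵀ * C + t • 1).det := by
      have : ((∑ i, vecMulVec (X i) (X i)) + T + Cᵀ * C + t • 1).PosDef := by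
        have h' : ((∑ i, vecMulVec (X i) (X i)) + T + Cᵀ * C + t • 1)
            = ((∑ i, vecMulVec (X i) (X i)) + T + Cᵀ * C) + t • 1 := by abel
        rw [h']
        exact Matrix.PosDef.posSemidef_add h1 (pd_smul_one ht0)
      exact this.det_pos
    have hd4 : (0:ℝ) < (T + Cᵀ * C + t • 1).det := by
      have : (T + Cᵀ * C + t • 1).PosDef :=
        Matrix.PosDef.posSemidef_add h3 (pd_smul_one ht0)
      exact this.det_pos
    rw [div_le_div_iff₀ hd1 hd2] at hdm
    -- now logs
    have goal' : Real.log (((∑ i, vecMulVec (X i) (X i)) + T + Cᵀ * C + t • 1).det)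
        + Real.log ((T + t • 1).det)
        ≤ Real.log (((∑ i, vecMulVec (X i) (X i)) + T + t • 1).det)
        + Real.log ((T + Cᵀ * C + t • 1).det) := by
      rw [← Real.log_mul hd3.ne' hd2.ne', ← Real.log_mul hd1.ne' hd4.ne']
      apply Real.log_le_log (mul_pos hd3 hd2)
      calc _ ≤ _ := hdm
        _ = _ := mul_comm _ _
    linarith [goal']
  · -- q = 1 : trace identity
    have key : ∀ {N : Matrix (Fin m) (Fin m) ℝ} (hN : N.PosSemidef),
        ∑ i, hN.1.eigenvalues i ^ (1:ℝ) = N.trace := by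
      intro N hN
      simp only [Real.rpow_one]
      exact sum_eigs_eq_trace hN.1
    rw [key h1, key hT, key h2, key h3, trace_add, trace_add, trace_add]
    ring_nf
    exact le_rfl

lemma Fq_mono {q : ℝ} (hq0 : 0 < q) (hq1 : q ≤ 1) {n₃ : ℕ}
    (C : Matrix (Fin n₃) (Fin m) ℝ)
    {T : Matrix (Fin m) (Fin m) ℝ} (hT : T.PosSemidef)
    (h3 : (T + Cᵀ * C).PosSemidef) :
    ∑ i, hT.1.eigenvalues i ^ q ≤ ∑ i, h3.1.eigenvalues i ^ q := by
  rcases lt_or_eq_of_le hq1 with hq1' | rfl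
  · have HH := Hq_pos hq0 hq1'
    rw [← mul_le_mul_iff_right₀ HH, master hq0 hq1' hT, master hq0 hq1' h3]
    apply setIntegral_mono_on (master_integrable hq0 hq1' hT)
      (master_integrable hq0 hq1' h3) measurableSet_Ioi
    intro t ht
    have ht0 : (0:ℝ) < t := ht
    apply mul_le_mul_of_nonneg_left _ (Real.rpow_nonneg ht0.le _)
    have hP : (T + t • (1 : Matrix (Fin m) (Fin m) ℝ)).PosDef :=
      Matrix.PosDef.posSemidef_add hT (pd_smul_one ht0)
    have hdm := det_mono (Finset.univ) (fun i => C i) hP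
    rw [← transpose_mul_self_eq_sum C] at hdm
    have e : T + t • (1 : Matrix (Fin m) (Fin m) ℝ) + Cᵀ * C = T + Cᵀ * C + t • 1 := by abel
    rw [e] at hdm
    have hd2 : (0:ℝ) < (T + t • 1).det := hP.det_pos
    have goal' : Real.log ((T + t • 1).det) ≤ Real.log ((T + Cᵀ * C + t • 1).det) :=
      Real.log_le_log hd2 hdm
    linarith [goal']
  · have key : ∀ {N : Matrix (Fin m) (Fin m) ℝ} (hN : N.PosSemidef),
        ∑ i, hN.1.eigenvalues i ^ (1:ℝ) = N.trace := by
      intro N hN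
      simp only [Real.rpow_one]
      exact sum_eigs_eq_trace hN.1
    rw [key hT, key h3, trace_add]
    linarith [trace_gram_nonneg C]


lemma eig_congr {N N' : Matrix (Fin m) (Fin m) ℝ} (h : N = N')
    (hN : N.IsHermitian) (hN' : N'.IsHermitian) : hN.eigenvalues = hN'.eigenvalues := by
  subst h; rfl

lemma psd_add {A B : Matrix (Fin m) (Fin m) ℝ} (hA : A.PosSemidef) (hB : B.PosSemidef) :
    (A + B).PosSemidef := by
  exact hA.add hB


lemma schatten_eq {p : ℝ} (hp0 : 0 < p) {K : Type*} [Fintype K] (M : Matrix K (Fin m) ℝ)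
    {N : Matrix (Fin m) (Fin m) ℝ} (hMN : Mᴴ * M = N) (hN : N.PosSemidef) :
    schattenNorm p M = (∑ i, hN.1.eigenvalues i ^ (p/2)) ^ (1/p) := by
  unfold schattenNorm
  congr 1
  have he : (Matrix.isHermitian_conjTranspose_mul_self M).eigenvalues = hN.1.eigenvalues :=
    eig_congr hMN _ _
  rw [he]
  refine Finset.sum_congr rfl fun i _ => ?_
  have hnn : 0 ≤ hN.1.eigenvalues i := hN.eigenvalues_nonneg i
  calc Real.sqrt (hN.1.eigenvalues i) ^ p
      = (hN.1.eigenvalues i ^ ((1:ℝ)/2)) ^ p := by rw [Real.sqrt_eq_rpow]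
    _ = hN.1.eigenvalues i ^ (((1:ℝ)/2) * p) := (Real.rpow_mul hnn _ _).symm
    _ = hN.1.eigenvalues i ^ (p/2) := by ring_nf


end SchattenSmoothAux

end SchattenAux

open SchattenSmoothAux in
/-- For `0 < p ≤ 2` and `0 < ε < 1`, the Schatten p-norm is `(ε, ε)`-smooth:
if `A = [X; Y]` and `(1 − ε)·‖A‖_{S_p} ≤ ‖Y‖_{S_p}`, then for every `C`,
`(1 − ε)·‖[A; C]‖_{S_p} ≤ ‖[Y; C]‖_{S_p}`. -/
theorem schattenNorm_smooth_of_le_two {m : ℕ} (p ε : ℝ) (hp0 : 0 < p) (hp2 : p ≤ 2)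
    (hε0 : 0 < ε) (hε1 : ε < 1) :
    ∀ {n₁ n₂ n₃ : ℕ} (X : Matrix (Fin n₁) (Fin m) ℝ) (Y : Matrix (Fin n₂) (Fin m) ℝ)
      (C : Matrix (Fin n₃) (Fin m) ℝ),
      (1 - ε) * schattenNorm p (Matrix.fromRows X Y) ≤ schattenNorm p Y →
      (1 - ε) * schattenNorm p (Matrix.fromRows (Matrix.fromRows X Y) C) ≤
        schattenNorm p (Matrix.fromRows Y C) := by
  intro n₁ n₂ n₃ X Y C h
  have hq0 : 0 < p/2 := by linarith
  have hq1 : p/2 ≤ 1 := by linarith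
  have ct : ∀ {k l : Type} (M : Matrix k l ℝ), Mᴴ = Mᵀ := by
    intro k l M; ext i j; simp [conjTranspose_apply]
  -- gram identities
  have gA : (fromRows X Y)ᴴ * fromRows X Y = Xᵀ * X + Yᵀ * Y := by
    rw [ct, transpose_fromRows, fromCols_mul_fromRows]
  have gZ : (fromRows (fromRows X Y) C)ᴴ * fromRows (fromRows X Y) C
      = Xᵀ * X + Yᵀ * Y + Cᵀ * C := by
    rw [ct, transpose_fromRows, fromCols_mul_fromRows, transpose_fromRows,
      fromCols_mul_fromRows]
  have gW : (fromRows Y C)ᴴ * fromRows Y C = Yᵀ * Y + Cᵀ * C := by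
    rw [ct, transpose_fromRows, fromCols_mul_fromRows]
  have gY : Yᴴ * Y = Yᵀ * Y := by rw [ct]
  -- PSD instances
  have hT : (Yᵀ * Y).PosSemidef := psd_gram Y
  have hA : (Xᵀ * X + Yᵀ * Y).PosSemidef := psd_add (psd_gram X) hT
  have hZ : (Xᵀ * X + Yᵀ * Y + Cᵀ * C).PosSemidef := psd_add hA (psd_gram C)
  have hW : (Yᵀ * Y + Cᵀ * C).PosSemidef := psd_add hT (psd_gram C)
  -- sums
  set a : ℝ := ∑ i, hA.1.eigenvalues i ^ (p/2) with hadef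
  set y : ℝ := ∑ i, hT.1.eigenvalues i ^ (p/2) with hydef
  set z : ℝ := ∑ i, hZ.1.eigenvalues i ^ (p/2) with hzdef
  set w : ℝ := ∑ i, hW.1.eigenvalues i ^ (p/2) with hwdef
  have ha0 : 0 ≤ a := Finset.sum_nonneg fun i _ => Real.rpow_nonneg (hA.eigenvalues_nonneg i) _
  have hy0 : 0 ≤ y := Finset.sum_nonneg fun i _ => Real.rpow_nonneg (hT.eigenvalues_nonneg i) _
  have hz0 : 0 ≤ z := Finset.sum_nonneg fun i _ => Real.rpow_nonneg (hZ.eigenvalues_nonneg i) _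
  have hw0 : 0 ≤ w := Finset.sum_nonneg fun i _ => Real.rpow_nonneg (hW.eigenvalues_nonneg i) _
  rw [schatten_eq hp0 _ gA hA, schatten_eq hp0 _ gY hT] at h
  rw [schatten_eq hp0 _ gZ hZ, schatten_eq hp0 _ gW hW]
  rw [← hadef, ← hydef] at h
  rw [← hzdef, ← hwdef]
  -- the key matrix inequalities
  have key2 : z + y ≤ a + w := Fq_submod hq0 hq1 X C hT hZ hA hW
  have key3 : y ≤ w := Fq_mono hq0 hq1 C hT hW
  -- θ
  set θ : ℝ := (1 - ε) ^ p with hθdef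
  have hε' : (0:ℝ) < 1 - ε := by linarith
  have hθ0 : 0 < θ := Real.rpow_pos_of_pos hε' p
  have hθ1 : θ ≤ 1 := Real.rpow_le_one hε'.le (by linarith) hp0.le
  have hppos : (0:ℝ) ≤ 1/p := by positivity
  have hppinv : (1/p) * p = 1 := by field_simp
  have hpinv : p * (1/p) = 1 := by field_simp
  -- hypothesis to θ * a ≤ y
  have key1 : θ * a ≤ y := by
    have h' := Real.rpow_le_rpow
      (mul_nonneg hε'.le (Real.rpow_nonneg ha0 _)) h hp0.le
    rw [Real.mul_rpow hε'.le (Real.rpow_nonneg ha0 _), ← Real.rpow_mul ha0,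
      ← Real.rpow_mul hy0, hppinv, Real.rpow_one, Real.rpow_one] at h'
    exact h'
  -- conclude
  have final : θ * z ≤ w := by
    have e1 : θ * (z + y) ≤ θ * (a + w) := mul_le_mul_of_nonneg_left key2 hθ0.le
    have e1' : θ * z + θ * y ≤ θ * a + θ * w := by ring_nf at e1 ⊢; linarith [e1]
    have e2 : 0 ≤ (1 - θ) * (w - y) := mul_nonneg (by linarith) (by linarith)
    have e2' : 0 ≤ w - θ * w - y + θ * y := by ring_nf at e2 ⊢; linarith [e2]
    linarith [e1', e2', key1]
  have h'' := Real.rpow_le_rpow (mul_nonneg hθ0.le hz0) final hppos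
  rw [Real.mul_rpow hθ0.le hz0, hθdef, ← Real.rpow_mul hε'.le, hpinv, Real.rpow_one] at h''
  exact h''
end

section
/- For p ≥ 2 and PSD matrices B, C of the same size, tr((B + C)^{p/2}) ≤ (tr(B^{p/2})^{2/p} + tr(C^{p/2})^{2/p})^{p/2}; i.e., the function B ↦ (tr(B^{p/2}))^{2/p} is subadditive on PSD matrices. -/
open Matrix Finset

namespace TraceRpowHalfAux

variable {n : ℕ}

/-- Trace of `D_d W D_e Wᴴ` as a double sum (real case). -/
lemma trace_diag_mul (d e : Fin n → ℝ) (W : Matrix (Fin n) (Fin n) ℝ) :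
    (Matrix.diagonal d * W * Matrix.diagonal e * star W).trace
      = ∑ i, ∑ j, d i * e j * (W i j) ^ 2 := by
  have h : ∀ i, (Matrix.diagonal d * W * Matrix.diagonal e * star W) i i
      = ∑ j, d i * e j * (W i j) ^ 2 := by
    intro i
    rw [Matrix.mul_apply]
    refine Finset.sum_congr rfl fun j _ => ?_
    rw [Matrix.mul_diagonal, Matrix.diagonal_mul, Matrix.star_apply, star_trivial]
    ring
  simp only [Matrix.trace, Matrix.diag]
  exact Finset.sum_congr rfl fun i _ => h i

/-- Weighted Hölder inequality with doubly stochastic weights. -/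
lemma holder_ds {q q' : ℝ} (hqq' : Real.HolderConjugate q q') (a b : Fin n → ℝ)
    (ha : ∀ i, 0 ≤ a i) (hb : ∀ j, 0 ≤ b j) (w : Fin n → Fin n → ℝ)
    (hw : ∀ i j, 0 ≤ w i j) (hrow : ∀ i, ∑ j, w i j = 1) (hcol : ∀ j, ∑ i, w i j = 1) :
    ∑ i, ∑ j, a i * b j * w i j ≤
      (∑ i, a i ^ q) ^ (1 / q) * (∑ j, b j ^ q') ^ (1 / q') := by
  have hq0 : q ≠ 0 := hqq'.pos.ne'
  have hq'0 : q' ≠ 0 := hqq'.symm.pos.ne'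
  have hsum : 1 / q + 1 / q' = 1 := by
    rw [one_div, one_div]; exact hqq'.inv_add_inv_eq_one
  have key := Real.inner_le_Lp_mul_Lq (Finset.univ (α := Fin n × Fin n))
      (fun x => a x.1 * w x.1 x.2 ^ (1 / q)) (fun x => b x.2 * w x.1 x.2 ^ (1 / q')) hqq'
  have hL : ∑ x : Fin n × Fin n,
      (a x.1 * w x.1 x.2 ^ (1 / q)) * (b x.2 * w x.1 x.2 ^ (1 / q'))
      = ∑ i, ∑ j, a i * b j * w i j := by
    rw [← Finset.sum_product']
    refine Finset.sum_congr rfl fun x _ => ?_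
    have hww : w x.1 x.2 ^ (1 / q) * w x.1 x.2 ^ (1 / q') = w x.1 x.2 := by
      rw [← Real.rpow_add' (hw x.1 x.2) (by rw [hsum]; norm_num), hsum, Real.rpow_one]
    calc (a x.1 * w x.1 x.2 ^ (1 / q)) * (b x.2 * w x.1 x.2 ^ (1 / q'))
        = a x.1 * b x.2 * (w x.1 x.2 ^ (1 / q) * w x.1 x.2 ^ (1 / q')) := by ring
      _ = a x.1 * b x.2 * w x.1 x.2 := by rw [hww]
  have hR1 : ∑ x : Fin n × Fin n, |a x.1 * w x.1 x.2 ^ (1 / q)| ^ q = ∑ i, a i ^ q := by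
    calc ∑ x : Fin n × Fin n, |a x.1 * w x.1 x.2 ^ (1 / q)| ^ q
        = ∑ i, ∑ j, a i ^ q * w i j := by
          rw [← Finset.sum_product']
          refine Finset.sum_congr rfl fun x _ => ?_
          rw [abs_of_nonneg (mul_nonneg (ha x.1) (Real.rpow_nonneg (hw x.1 x.2) _)),
            Real.mul_rpow (ha x.1) (Real.rpow_nonneg (hw x.1 x.2) _),
            ← Real.rpow_mul (hw x.1 x.2), one_div_mul_cancel hq0, Real.rpow_one]
      _ = ∑ i, a i ^ q := by
          simp only [← Finset.mul_sum]
          exact Finset.sum_congr rfl fun i _ => by rw [hrow i, mul_one]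
  have hR2 : ∑ x : Fin n × Fin n, |b x.2 * w x.1 x.2 ^ (1 / q')| ^ q' = ∑ j, b j ^ q' := by
    calc ∑ x : Fin n × Fin n, |b x.2 * w x.1 x.2 ^ (1 / q')| ^ q'
        = ∑ i, ∑ j, b j ^ q' * w i j := by
          rw [← Finset.sum_product']
          refine Finset.sum_congr rfl fun x _ => ?_
          rw [abs_of_nonneg (mul_nonneg (hb x.2) (Real.rpow_nonneg (hw x.1 x.2) _)),
            Real.mul_rpow (hb x.2) (Real.rpow_nonneg (hw x.1 x.2) _),
            ← Real.rpow_mul (hw x.1 x.2), one_div_mul_cancel hq'0, Real.rpow_one]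
      _ = ∑ j, ∑ i, b j ^ q' * w i j := Finset.sum_comm
      _ = ∑ j, b j ^ q' := by
          simp only [← Finset.mul_sum]
          exact Finset.sum_congr rfl fun j _ => by rw [hcol j, mul_one]
  rw [hL, hR1, hR2] at key
  exact key

/-- Sum of eigenvalues equals the trace (real symmetric case). -/
lemma sum_eigenvalues_eq_trace {A : Matrix (Fin n) (Fin n) ℝ} (hA : A.IsHermitian) :
    ∑ i, hA.eigenvalues i = A.trace := by
  have hspec := hA.spectral_theorem
  set U : Matrix (Fin n) (Fin n) ℝ := (hA.eigenvectorUnitary : Matrix (Fin n) (Fin n) ℝ)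
  have hU : star U * U = 1 := Matrix.UnitaryGroup.star_mul_self hA.eigenvectorUnitary
  have hA' : A = U * Matrix.diagonal hA.eigenvalues * star U := by
    simpa [RCLike.ofReal_real_eq_id] using hspec
  rw [show A.trace = (U * Matrix.diagonal hA.eigenvalues * star U).trace from
    congrArg Matrix.trace hA']
  rw [Matrix.trace_mul_cycle, hU, Matrix.one_mul, Matrix.trace_diagonal]

end TraceRpowHalfAux

open TraceRpowHalfAux

/-- For `p ≥ 2` and PSD matrices `B`, `C`,
`tr((B + C)^{p/2}) ≤ (tr(B^{p/2})^{2/p} + tr(C^{p/2})^{2/p})^{p/2}`, where `tr(M^q)` for a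
PSD matrix `M` is defined spectrally as `∑ i, λᵢ(M) ^ q`; i.e. `B ↦ (tr(B^{p/2}))^{2/p}`
is subadditive on PSD matrices. -/
theorem trace_rpow_half_subadditive {n : ℕ} (B C : Matrix (Fin n) (Fin n) ℝ)
    (hB : B.PosSemidef) (hC : C.PosSemidef) (p : ℝ) (hp : 2 ≤ p) :
    ∑ i, (hB.isHermitian.add hC.isHermitian).eigenvalues i ^ (p / 2) ≤
      ((∑ i, hB.isHermitian.eigenvalues i ^ (p / 2)) ^ (2 / p) +
        (∑ i, hC.isHermitian.eigenvalues i ^ (p / 2)) ^ (2 / p)) ^ (p / 2) := by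
  have hp0 : (0:ℝ) < p := lt_of_lt_of_le two_pos hp
  set q : ℝ := p / 2 with hqdef
  have hq1 : 1 ≤ q := by rw [hqdef]; linarith
  have hq0 : (0:ℝ) < q := by linarith
  have h2p : 2 / p = 1 / q := by rw [hqdef, one_div_div]
  rw [h2p]
  set hAH := hB.isHermitian.add hC.isHermitian with hAHdef
  set lA := hAH.eigenvalues with hlAdef
  set lB := hB.isHermitian.eigenvalues with hlBdef
  set lC := hC.isHermitian.eigenvalues with hlCdef
  have hlA : ∀ i, 0 ≤ lA i := fun i => (hB.add hC).eigenvalues_nonneg i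
  have hlB : ∀ i, 0 ≤ lB i := fun i => hB.eigenvalues_nonneg i
  have hlC : ∀ i, 0 ≤ lC i := fun i => hC.eigenvalues_nonneg i
  rcases eq_or_lt_of_le hq1 with hq1' | hq1'
  · -- the case q = 1
    simp only [← hq1', one_div_one, Real.rpow_one]
    rw [sum_eigenvalues_eq_trace hAH, sum_eigenvalues_eq_trace hB.isHermitian,
      sum_eigenvalues_eq_trace hC.isHermitian, Matrix.trace_add]
  · -- the case 1 < q
    set q' := Real.conjExponent q with hq'def
    have hqq' : q.HolderConjugate q' := Real.HolderConjugate.conjExponent hq1'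
    have hsum : 1 / q + 1 / q' = 1 := by
      rw [one_div, one_div]; exact hqq'.inv_add_inv_eq_one
    have hq'mul : (q - 1) * q' = q := by
      rw [hq'def, Real.conjExponent]
      have : q - 1 ≠ 0 := by linarith
      field_simp
    -- spectral data
    set U : Matrix (Fin n) (Fin n) ℝ := (hAH.eigenvectorUnitary : Matrix (Fin n) (Fin n) ℝ) with hUdef
    set V : Matrix (Fin n) (Fin n) ℝ := (hB.isHermitian.eigenvectorUnitary : Matrix (Fin n) (Fin n) ℝ) with hVdef
    set V' : Matrix (Fin n) (Fin n) ℝ := (hC.isHermitian.eigenvectorUnitary : Matrix (Fin n) (Fin n) ℝ) with hV'def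
    have hUU : star U * U = 1 := Matrix.UnitaryGroup.star_mul_self _
    have hUU' : U * star U = 1 := hAH.eigenvectorUnitary.2.2
    have hVV : star V * V = 1 := Matrix.UnitaryGroup.star_mul_self _
    have hVV' : V * star V = 1 := hB.isHermitian.eigenvectorUnitary.2.2
    have hV'V' : star V' * V' = 1 := Matrix.UnitaryGroup.star_mul_self _
    have hV'V'' : V' * star V' = 1 := hC.isHermitian.eigenvectorUnitary.2.2
    have hspecA : B + C = U * Matrix.diagonal lA * star U := by
      simpa [RCLike.ofReal_real_eq_id, Function.id_comp] using hAH.spectral_theorem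
    have hspecB : B = V * Matrix.diagonal lB * star V := by
      simpa [RCLike.ofReal_real_eq_id, Function.id_comp] using hB.isHermitian.spectral_theorem
    have hspecC : C = V' * Matrix.diagonal lC * star V' := by
      simpa [RCLike.ofReal_real_eq_id, Function.id_comp] using hC.isHermitian.spectral_theorem
    set μ : Fin n → ℝ := fun j => lA j ^ (q - 1) with hμdef
    have hμ : ∀ j, 0 ≤ μ j := fun j => Real.rpow_nonneg (hlA j) _
    set M : Matrix (Fin n) (Fin n) ℝ := U * Matrix.diagonal μ * star U with hMdef
    -- trace of (B + C) * M
    have hAM : ((B + C) * M).trace = ∑ i, lA i ^ q := by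
      have e : (B + C) * M = U * (Matrix.diagonal lA * Matrix.diagonal μ) * star U := by
        rw [hspecA, hMdef]
        have h1 : star U * (U * (Matrix.diagonal μ * star U))
            = Matrix.diagonal μ * star U := by
          rw [← Matrix.mul_assoc, hUU, Matrix.one_mul]
        simp only [Matrix.mul_assoc]
        rw [h1]
      rw [e, Matrix.trace_mul_cycle, hUU, Matrix.one_mul, Matrix.diagonal_mul_diagonal,
        Matrix.trace_diagonal]
      refine Finset.sum_congr rfl fun i _ => ?_
      have hqe : (1:ℝ) + (q - 1) ≠ 0 := by
        intro h; apply hq0.ne'; linarith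
      rw [show q = 1 + (q - 1) by ring, Real.rpow_add' (hlA i) hqe, Real.rpow_one]
    -- generic trace computation for one summand
    have key : ∀ (X : Matrix (Fin n) (Fin n) ℝ) (P : Matrix (Fin n) (Fin n) ℝ)
        (lX : Fin n → ℝ) (_ : X = P * Matrix.diagonal lX * star P)
        (_ : star P * P = 1) (_ : P * star P = 1) (_ : ∀ i, 0 ≤ lX i),
        (X * M).trace ≤ (∑ i, lX i ^ q) ^ (1 / q) * (∑ j, μ j ^ q') ^ (1 / q') := by
      intro X P lX hspecX hPP hPP' hlX
      have e1 : X * M = P * (Matrix.diagonal lX * (star P * U) * Matrix.diagonal μ * star U) := by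
        rw [hspecX, hMdef]; simp only [Matrix.mul_assoc]
      have e2 : (Matrix.diagonal lX * (star P * U) * Matrix.diagonal μ * star U) * P
          = Matrix.diagonal lX * (star P * U) * Matrix.diagonal μ * star (star P * U) := by
        rw [Matrix.star_mul, star_star]; simp only [Matrix.mul_assoc]
      have etr : (X * M).trace
          = ∑ i, ∑ j, lX i * μ j * ((star P * U) i j) ^ 2 := by
        rw [e1, Matrix.trace_mul_comm, e2, trace_diag_mul]
      -- double stochasticity of (star P * U)
      have hW1 : (star P * U) * star (star P * U) = 1 := by
        rw [Matrix.star_mul, star_star]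
        calc (star P * U) * (star U * P) = star P * (U * star U) * P := by
              simp only [Matrix.mul_assoc]
          _ = 1 := by rw [hUU', Matrix.mul_one, hPP]
      have hW2 : star (star P * U) * (star P * U) = 1 := by
        rw [Matrix.star_mul, star_star]
        calc (star U * P) * (star P * U) = star U * (P * star P) * U := by
              simp only [Matrix.mul_assoc]
          _ = 1 := by rw [hPP', Matrix.mul_one, hUU]
      have hrow : ∀ i, ∑ j, ((star P * U) i j) ^ 2 = 1 := by
        intro i
        have h1 : ((star P * U) * star (star P * U)) i i = 1 := by
          rw [hW1, Matrix.one_apply_eq]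
        rw [Matrix.mul_apply] at h1
        simp only [Matrix.star_apply, star_trivial] at h1
        simpa [sq] using h1
      have hcol : ∀ j, ∑ i, ((star P * U) i j) ^ 2 = 1 := by
        intro j
        have h1 : (star (star P * U) * (star P * U)) j j = 1 := by
          rw [hW2, Matrix.one_apply_eq]
        rw [Matrix.mul_apply] at h1
        simp only [Matrix.star_apply, star_trivial] at h1
        have h2 : ∑ i, (star P * U) i j * (star P * U) i j = 1 := by
          calc ∑ i, (star P * U) i j * (star P * U) i j
              = ∑ i, (star P * U) i j * (star P * U) i j := rfl
            _ = 1 := h1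
        simpa [sq] using h2
      rw [etr]
      exact holder_ds hqq' lX μ hlX hμ (fun i j => ((star P * U) i j) ^ 2)
        (fun i j => sq_nonneg _) hrow hcol
    have hμT : ∑ j, μ j ^ q' = ∑ j, lA j ^ q := by
      refine Finset.sum_congr rfl fun j _ => ?_
      rw [hμdef, ← Real.rpow_mul (hlA j), hq'mul]
    set T : ℝ := ∑ i, lA i ^ q with hTdef
    have hTnn : 0 ≤ T := Finset.sum_nonneg fun i _ => Real.rpow_nonneg (hlA i) _
    have hBM := key B V lB hspecB hVV hVV' hlB
    have hCM := key C V' lC hspecC hV'V' hV'V'' hlC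
    rw [hμT] at hBM hCM
    set S : ℝ := (∑ i, lB i ^ q) ^ (1 / q) + (∑ i, lC i ^ q) ^ (1 / q) with hSdef
    have hSnn : 0 ≤ S :=
      add_nonneg (Real.rpow_nonneg (Finset.sum_nonneg fun i _ => Real.rpow_nonneg (hlB i) _) _)
        (Real.rpow_nonneg (Finset.sum_nonneg fun i _ => Real.rpow_nonneg (hlC i) _) _)
    have hmain : T ≤ S * T ^ (1 / q') := by
      calc T = ((B + C) * M).trace := hAM.symm
        _ = (B * M).trace + (C * M).trace := by rw [Matrix.add_mul, Matrix.trace_add]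
        _ ≤ (∑ i, lB i ^ q) ^ (1 / q) * T ^ (1 / q')
              + (∑ i, lC i ^ q) ^ (1 / q) * T ^ (1 / q') := add_le_add hBM hCM
        _ = S * T ^ (1 / q') := by rw [hSdef]; ring
    show T ≤ S ^ q
    rcases hTnn.eq_or_lt with h | h
    · rw [← h]; exact Real.rpow_nonneg hSnn q
    · have h2 : T ^ (1 / q) * T ^ (1 / q') = T := by
        rw [← Real.rpow_add h, hsum, Real.rpow_one]
      have hTq' : (0:ℝ) < T ^ (1 / q') := Real.rpow_pos_of_pos h _
      have hT1 : T ^ (1 / q) ≤ S := by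
        have : T ^ (1 / q) * T ^ (1 / q') ≤ S * T ^ (1 / q') := by
          rw [h2]; exact hmain
        exact le_of_mul_le_mul_right this hTq'
      calc T = (T ^ (1 / q)) ^ q := by
            rw [← Real.rpow_mul hTnn, one_div_mul_cancel hq0.ne', Real.rpow_one]
        _ ≤ S ^ q := Real.rpow_le_rpow (Real.rpow_nonneg hTnn _) hT1 hq0.le
end
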